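/- Let W : ℝ² → ℝ be continuous, Λ-periodic and odd (W(−x) = −W(x)). Let φ : ℝ² → ℂ be continuous, ξ⋆^A-quasiperiodic, and satisfy φ(Rx) = τ·φ(x) for all x ∈ ℝ². Define ψ(x) := φ(−x). Then: (i) ψ is ξ⋆^B-quasiperiodic; (ii) ψ(Rx) = τ·ψ(x) for all x ∈ ℝ²; (iii) ∫_𝕃 W(x)·|ψ(x)|² dx = −∫_𝕃 W(x)·|φ(x)|² dx. (Hence the coefficients ϑ⋆^A := ∫_𝕃 W|φ|² and ϑ⋆^B := ∫_𝕃 W|ψ|² attached to the two Dirac momenta satisfy ϑ⋆^A + ϑ⋆^B = 0.) -/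
import Mathlib


open MeasureTheory

/-- The Euclidean inner product on `ℝ²`. -/
def dot2 (x y : ℝ × ℝ) : ℝ := x.1 * y.1 + x.2 * y.2

/-- `f` is `ξ`-quasiperiodic with respect to the lattice `ℤv₁ + ℤv₂`. -/
def Quasiperiodic (v₁ v₂ ξ : ℝ × ℝ) (f : ℝ × ℝ → ℂ) : Prop :=
  ∀ (x : ℝ × ℝ) (m n : ℤ),
    f (x + ((m : ℝ) • v₁ + (n : ℝ) • v₂)) =
      Complex.exp (Complex.I * (dot2 ξ ((m : ℝ) • v₁ + (n : ℝ) • v₂) : ℂ)) * f x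

/-- The fundamental cell `𝕃 = {s₁v₁ + s₂v₂ : s₁, s₂ ∈ [0,1)}`. -/
def cell (v₁ v₂ : ℝ × ℝ) : Set (ℝ × ℝ) :=
  {x | ∃ s₁ s₂ : ℝ, s₁ ∈ Set.Ico (0 : ℝ) 1 ∧ s₂ ∈ Set.Ico (0 : ℝ) 1 ∧
    x = s₁ • v₁ + s₂ • v₂}

/-- Generator `v₁ = a(√3, 1)` of the equilateral lattice. -/
noncomputable def hex1 (a : ℝ) : ℝ × ℝ := (Real.sqrt 3 * a, a)

/-- Generator `v₂ = a(√3, −1)` of the equilateral lattice. -/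
noncomputable def hex2 (a : ℝ) : ℝ × ℝ := (Real.sqrt 3 * a, -a)

/-- The rotation `R` by `2π/3`. -/
noncomputable def Rot (x : ℝ × ℝ) : ℝ × ℝ :=
  ((-x.1 + Real.sqrt 3 * x.2) / 2, (-(Real.sqrt 3) * x.1 - x.2) / 2)

/-- `τ = e^{2πi/3}`. -/
noncomputable def tau3 : ℂ := Complex.exp (2 * Real.pi * Complex.I / 3)

/-- The linear map `(s₁,s₂) ↦ s₁v₁ + s₂v₂`. -/
noncomputable def Lmap (v₁ v₂ : ℝ × ℝ) : (ℝ × ℝ) →ₗ[ℝ] (ℝ × ℝ) where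
  toFun p := p.1 • v₁ + p.2 • v₂
  map_add' p q := by
    simp only [Prod.fst_add, Prod.snd_add, add_smul]; abel
  map_smul' c p := by
    simp only [Prod.smul_fst, Prod.smul_snd, smul_eq_mul, RingHom.id_apply, smul_add, mul_smul]

lemma Lmap_image (v₁ v₂ : ℝ × ℝ) (s t : Set ℝ) : Lmap v₁ v₂ '' (s ×ˢ t) =
    {x | ∃ s₁ s₂ : ℝ, s₁ ∈ s ∧ s₂ ∈ t ∧ x = s₁ • v₁ + s₂ • v₂} := by
  ext x
  simp only [Set.mem_image, Set.mem_prod, Set.mem_setOf_eq, Lmap, LinearMap.coe_mk, AddHom.coe_mk]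
  constructor
  · rintro ⟨⟨p, q⟩, ⟨hp, hq⟩, rfl⟩; exact ⟨p, q, hp, hq, rfl⟩
  · rintro ⟨p, q, hp, hq, rfl⟩; exact ⟨⟨p, q⟩, ⟨hp, hq⟩, rfl⟩

lemma image_symmDiff_subset (fn : ℝ × ℝ → ℝ × ℝ) (A B : Set (ℝ × ℝ)) :
    symmDiff (fn '' A) (fn '' B) ⊆ fn '' symmDiff A B := by
  intro x hx
  rcases Set.mem_symmDiff.mp hx with ⟨⟨u, hu, rfl⟩, hx2⟩ | ⟨⟨u, hu, rfl⟩, hx2⟩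
  · exact ⟨u, Set.mem_symmDiff.mpr (Or.inl ⟨hu, fun h => hx2 ⟨u, h, rfl⟩⟩), rfl⟩
  · exact ⟨u, Set.mem_symmDiff.mpr (Or.inr ⟨hu, fun h => hx2 ⟨u, h, rfl⟩⟩), rfl⟩

lemma square_symmDiff_null :
    volume (symmDiff (Set.Ico (0:ℝ) 1 ×ˢ Set.Ico (0:ℝ) 1) (Set.Ioc (0:ℝ) 1 ×ˢ Set.Ioc (0:ℝ) 1)) = 0 := by
  have hsub : symmDiff (Set.Ico (0:ℝ) 1 ×ˢ Set.Ico (0:ℝ) 1) (Set.Ioc (0:ℝ) 1 ×ˢ Set.Ioc (0:ℝ) 1) ⊆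
      (({0, 1} : Set ℝ) ×ˢ (Set.univ : Set ℝ)) ∪ ((Set.univ : Set ℝ) ×ˢ ({0, 1} : Set ℝ)) := by
    rintro ⟨x, y⟩ h
    rcases Set.mem_symmDiff.mp h with ⟨⟨hx, hy⟩, hn⟩ | ⟨⟨hx, hy⟩, hn⟩
    · by_cases hx0 : x = (0:ℝ)
      · exact Set.mem_union_left _ ⟨by simp [hx0], trivial⟩
      · have hxI : x ∈ Set.Ioc (0:ℝ) 1 := ⟨lt_of_le_of_ne hx.1 (Ne.symm hx0), le_of_lt hx.2⟩
        have hy0 : y = 0 := by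
          by_contra hy0
          exact hn ⟨hxI, ⟨lt_of_le_of_ne hy.1 (Ne.symm hy0), le_of_lt hy.2⟩⟩
        exact Set.mem_union_right _ ⟨trivial, by simp [hy0]⟩
    · by_cases hx1 : x = (1:ℝ)
      · exact Set.mem_union_left _ ⟨by simp [hx1], trivial⟩
      · have hxI : x ∈ Set.Ico (0:ℝ) 1 := ⟨le_of_lt hx.1, lt_of_le_of_ne hx.2 hx1⟩
        have hy1 : y = 1 := by
          by_contra hy1
          exact hn ⟨hxI, ⟨le_of_lt hy.1, lt_of_le_of_ne hy.2 hy1⟩⟩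
        exact Set.mem_union_right _ ⟨trivial, by simp [hy1]⟩
  refine measure_mono_null hsub ?_
  have hfin : volume ({0, 1} : Set ℝ) = 0 := by
    rw [Set.insert_eq]
    exact measure_union_null Real.volume_singleton Real.volume_singleton
  apply measure_union_null
  · rw [Measure.volume_eq_prod, Measure.prod_prod, hfin, zero_mul]
  · rw [Measure.volume_eq_prod, Measure.prod_prod, hfin, mul_zero]

lemma shift_setIntegral (w : ℝ × ℝ) (F : ℝ × ℝ → ℝ) (s : Set (ℝ × ℝ)) :
    ∫ x in (fun x : ℝ × ℝ => w + (-x)) ⁻¹' s, F (w + (-x)) = ∫ x in s, F x :=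
  MeasurePreserving.setIntegral_preimage_emb
    ((measurePreserving_add_left volume w).comp (Measure.measurePreserving_neg volume))
    (((MeasurableEquiv.neg (ℝ × ℝ)).trans (MeasurableEquiv.addLeft w)).measurableEmbedding) F s

theorem stmt6 (a : ℝ) (ha : 0 < a) (hdet : 2 * Real.sqrt 3 * a ^ 2 = 1)
    (k₁ k₂ : ℝ × ℝ)
    (hk11 : dot2 k₁ (hex1 a) = 1) (hk12 : dot2 k₁ (hex2 a) = 0)
    (hk21 : dot2 k₂ (hex1 a) = 0) (hk22 : dot2 k₂ (hex2 a) = 1)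
    (W : ℝ × ℝ → ℝ) (hWcont : Continuous W)
    (hWper : ∀ (x : ℝ × ℝ) (m n : ℤ),
      W (x + ((m : ℝ) • hex1 a + (n : ℝ) • hex2 a)) = W x)
    (hWodd : ∀ x, W (-x) = -W x)
    (φ : ℝ × ℝ → ℂ) (hφcont : Continuous φ)
    (hφqp : Quasiperiodic (hex1 a) (hex2 a)
      ((2 * Real.pi / 3) • ((2 : ℝ) • k₁ + k₂)) φ)
    (hφrot : ∀ x, φ (Rot x) = tau3 * φ x)
    (ψ : ℝ × ℝ → ℂ) (hψ : ∀ x, ψ x = φ (-x)) :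
    Quasiperiodic (hex1 a) (hex2 a) ((2 * Real.pi / 3) • (k₁ + (2 : ℝ) • k₂)) ψ ∧
    (∀ x, ψ (Rot x) = tau3 * ψ x) ∧
    (∫ x in cell (hex1 a) (hex2 a), W x * Complex.normSq (ψ x)) =
      -∫ x in cell (hex1 a) (hex2 a), W x * Complex.normSq (φ x) := by
  set v₁ := hex1 a with hv₁
  set v₂ := hex2 a with hv₂
  -- dot product computations
  have dotB : ∀ m n : ℝ, dot2 ((2 * Real.pi / 3) • (k₁ + (2 : ℝ) • k₂)) (m • v₁ + n • v₂)
      = (2 * Real.pi / 3) * (m + 2 * n) := by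
    intro m n
    simp only [dot2, hex1, hex2, hv₁, hv₂] at hk11 hk12 hk21 hk22 ⊢
    simp only [hv₁, hv₂, hex1, hex2, Prod.smul_fst, Prod.smul_snd, Prod.fst_add, Prod.snd_add,
      smul_eq_mul]
    linear_combination (2 * Real.pi / 3 * m) * hk11 + (2 * Real.pi / 3 * n) * hk12 +
      (2 * (2 * Real.pi / 3) * m) * hk21 + (2 * (2 * Real.pi / 3) * n) * hk22
  have dotA : ∀ m n : ℝ, dot2 ((2 * Real.pi / 3) • ((2 : ℝ) • k₁ + k₂)) (m • v₁ + n • v₂)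
      = (2 * Real.pi / 3) * (2 * m + n) := by
    intro m n
    simp only [dot2, hex1, hex2, hv₁, hv₂] at hk11 hk12 hk21 hk22 ⊢
    simp only [hv₁, hv₂, hex1, hex2, Prod.smul_fst, Prod.smul_snd, Prod.fst_add, Prod.snd_add,
      smul_eq_mul]
    linear_combination (2 * (2 * Real.pi / 3) * m) * hk11 + (2 * (2 * Real.pi / 3) * n) * hk12 +
      ((2 * Real.pi / 3) * m) * hk21 + ((2 * Real.pi / 3) * n) * hk22
  refine ⟨?_, ?_, ?_⟩
  · -- (i) quasiperiodicity of ψ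
    intro x m n
    have harg : -(x + ((m : ℝ) • v₁ + (n : ℝ) • v₂))
        = -x + ((((-m : ℤ)) : ℝ) • v₁ + (((-n : ℤ)) : ℝ) • v₂) := by
      push_cast
      module
    rw [hψ, harg, hφqp (-x) (-m) (-n), ← hψ x]
    congr 1
    rw [dotA, dotB]
    push_cast
    refine Complex.exp_eq_exp_iff_exists_int.mpr ⟨-m - n, ?_⟩
    push_cast
    ring
  · -- (ii) rotation equivariance of ψ
    intro x
    have : -Rot x = Rot (-x) := by
      simp only [Rot, Prod.neg_mk, Prod.fst_neg, Prod.snd_neg, Prod.mk.injEq]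
      constructor <;> ring
    rw [hψ, this, hφrot, ← hψ]
  · -- (iii) the integral identity
    set w : ℝ × ℝ := v₁ + v₂ with hw
    set F : ℝ × ℝ → ℝ := fun y => W y * Complex.normSq (φ y) with hF
    set cellIoc : Set (ℝ × ℝ) :=
      {x | ∃ s₁ s₂ : ℝ, s₁ ∈ Set.Ioc (0:ℝ) 1 ∧ s₂ ∈ Set.Ioc (0:ℝ) 1 ∧ x = s₁ • v₁ + s₂ • v₂}
      with hcellIoc
    -- preimage identity
    have hpre : (fun x : ℝ × ℝ => w + (-x)) ⁻¹' cellIoc = cell v₁ v₂ := by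
      ext x
      simp only [Set.mem_preimage, hcellIoc, cell, Set.mem_setOf_eq, Set.mem_Ico, Set.mem_Ioc]
      constructor
      · rintro ⟨t₁, t₂, ht₁, ht₂, heq⟩
        refine ⟨1 - t₁, 1 - t₂, ⟨by linarith [ht₁.2], by linarith [ht₁.1]⟩,
          ⟨by linarith [ht₂.2], by linarith [ht₂.1]⟩, ?_⟩
        have hx : x = w - (t₁ • v₁ + t₂ • v₂) := by rw [← heq]; abel
        rw [hx, hw]
        module
      · rintro ⟨s₁, s₂, hs₁, hs₂, rfl⟩
        refine ⟨1 - s₁, 1 - s₂, ⟨by linarith [hs₁.2], by linarith [hs₁.1]⟩,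
          ⟨by linarith [hs₂.2], by linarith [hs₂.1]⟩, ?_⟩
        rw [hw]
        module
    -- periodicity of F
    have hFper : ∀ y : ℝ × ℝ, F (w + (-y)) = F (-y) := by
      intro y
      have harg : w + (-y) = (-y) + ((((1 : ℤ)) : ℝ) • v₁ + (((1 : ℤ)) : ℝ) • v₂) := by
        push_cast
        rw [hw]
        module
      have hWeq : W (w + (-y)) = W (-y) := by rw [harg]; exact hWper (-y) 1 1
      have hφeq : Complex.normSq (φ (w + (-y))) = Complex.normSq (φ (-y)) := by
        rw [harg, hφqp (-y) 1 1, Complex.normSq_mul]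
        have : Complex.normSq (Complex.exp (Complex.I *
            (dot2 ((2 * Real.pi / 3) • ((2:ℝ) • k₁ + k₂))
              (((1:ℤ):ℝ) • v₁ + ((1:ℤ):ℝ) • v₂) : ℝ))) = 1 := by
          rw [Complex.normSq_eq_norm_sq, Complex.norm_exp]
          norm_num [Complex.mul_re]
        rw [this, one_mul]
      simp only [hF, hWeq, hφeq]
    -- pointwise identity for the ψ-integrand
    have h1 : ∀ x : ℝ × ℝ, W x * Complex.normSq (ψ x) = -F (w + (-x)) := by
      intro x
      rw [hFper x]
      simp only [hF]
      have : W x = -W (-x) := by rw [hWodd]; ring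
      rw [hψ, this]
      ring
    -- ae equality of the two cells
    have hcell_img : cell v₁ v₂ = Lmap v₁ v₂ '' (Set.Ico (0:ℝ) 1 ×ˢ Set.Ico (0:ℝ) 1) := by
      rw [Lmap_image]; rfl
    have hcellIoc_img : cellIoc = Lmap v₁ v₂ '' (Set.Ioc (0:ℝ) 1 ×ˢ Set.Ioc (0:ℝ) 1) := by
      rw [Lmap_image]
    have hae : cellIoc =ᵐ[volume] cell v₁ v₂ := by
      rw [← measure_symmDiff_eq_zero_iff]
      have hnull : volume ((Lmap v₁ v₂) '' symmDiff (Set.Ioc (0:ℝ) 1 ×ˢ Set.Ioc (0:ℝ) 1)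
          (Set.Ico (0:ℝ) 1 ×ˢ Set.Ico (0:ℝ) 1)) = 0 := by
        rw [Measure.addHaar_image_linearMap, symmDiff_comm, square_symmDiff_null, mul_zero]
      refine measure_mono_null ?_ hnull
      rw [hcell_img, hcellIoc_img]
      exact image_symmDiff_subset _ _ _
    calc (∫ x in cell v₁ v₂, W x * Complex.normSq (ψ x))
        = ∫ x in cell v₁ v₂, -F (w + (-x)) := by simp only [h1]
      _ = -∫ x in cell v₁ v₂, F (w + (-x)) := integral_neg _
      _ = -∫ x in (fun x : ℝ × ℝ => w + (-x)) ⁻¹' cellIoc, F (w + (-x)) := by rw [hpre]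
      _ = -∫ x in cellIoc, F x := by rw [shift_setIntegral]
      _ = -∫ x in cell v₁ v₂, F x := by rw [setIntegral_congr_set hae]
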